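/- arXiv:2605.11309 — 11 statements merged into one kernel-verified Lean document; each statement's English description precedes it below -/
import Mathlib

section
/- Suppose the directed graph G = (V,E) satisfies the 2-reach condition with parameter ρ = 1 (i.e., for every F1, F2 ⊆ V with |F1| ≤ f and |F2| ≤ f, and every u ∈ V−F1 and v ∈ V−F2, the sets reach_u(F1) and reach_v(F2) intersect). Then G satisfies the 1-reach condition with parameter ρ = f+1 (i.e., for every F ⊆ V with |F| ≤ f and all u, v ∈ V−F, |reach_u(F) ∩ reach_v(F)| ≥ f+1). -/
/-- Edge relation of the induced subgraph `G_F` (both endpoints avoid `F`). -/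
def stepRel {V : Type*} (E : V → V → Prop) (F : Set V) (a b : V) : Prop :=
  a ∉ F ∧ b ∉ F ∧ E a b

/-- `reachSet E F u`: vertices `w ∉ F` having a directed path (possibly trivial)
to `u` that uses only vertices outside `F`. -/
def reachSet {V : Type*} (E : V → V → Prop) (F : Set V) (u : V) : Set V :=
  {w | w ∉ F ∧ Relation.ReflTransGen (stepRel E F) w u}

/-- `S` is a source component of the induced subgraph `G_F`: it is a strongly
connected component of `G_F` (an equivalence class of mutual reachability,
i.e. a maximal mutually-connected set), with no incoming edges of `G_F` from
vertices outside `S`. -/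
def IsSourceComponent {V : Type*} (E : V → V → Prop) (F : Set V) (S : Set V) : Prop :=
  (∃ v ∉ F, S = {w | Relation.ReflTransGen (stepRel E F) v w ∧
                     Relation.ReflTransGen (stepRel E F) w v}) ∧
  ∀ a ∉ S, ∀ b ∈ S, ¬ stepRel E F a b

/-- If `w` can reach `z` in `G_F`, then everything reaching `w` reaches `z`. -/
lemma reachSet_subset_of_mem {V : Type*} (E : V → V → Prop) (F : Set V) {w z : V}
    (h : w ∈ reachSet E F z) : reachSet E F w ⊆ reachSet E F z := by
  rintro x ⟨hx, hpath⟩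
  exact ⟨hx, hpath.trans h.2⟩

theorem two_reach_one_implies_one_reach_fplus1 {V : Type*} [Fintype V]
    (E : V → V → Prop) (f : ℕ) (hf : 0 < f) (hfn : f < Fintype.card V)
    (h2 : ∀ F1 F2 : Set V, F1.ncard ≤ f → F2.ncard ≤ f →
      ∀ u ∉ F1, ∀ v ∉ F2, (reachSet E F1 u ∩ reachSet E F2 v).Nonempty) :
    ∀ F : Set V, F.ncard ≤ f → ∀ u ∉ F, ∀ v ∉ F,
      f + 1 ≤ (reachSet E F u ∩ reachSet E F v).ncard := by
  intro F hF u hu v hv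
  by_contra hlt
  push_neg at hlt
  set X := reachSet E F u ∩ reachSet E F v with hXdef
  have hXf : X.ncard ≤ f := Nat.lt_succ_iff.mp hlt
  -- there is a vertex outside F
  have hFne : F ≠ Set.univ := by
    intro h
    rw [h, Set.ncard_univ, Nat.card_eq_fintype_card] at hF
    omega
  obtain ⟨w0, hw0⟩ := (Set.ne_univ_iff_exists_notMem F).mp hFne
  -- pick s ∉ F with minimal reach set (by cardinality)
  set K : Set ℕ := {k | ∃ w, w ∉ F ∧ (reachSet E F w).ncard = k} with hKdef
  have hKne : K.Nonempty := ⟨_, w0, hw0, rfl⟩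
  obtain ⟨s, hsF, hscard⟩ : ∃ w, w ∉ F ∧ (reachSet E F w).ncard = sInf K := Nat.sInf_mem hKne
  have hmin : ∀ w, w ∉ F → sInf K ≤ (reachSet E F w).ncard := fun w hw => Nat.sInf_le ⟨w, hw, rfl⟩
  -- the minimal reach set is contained in every reach set
  have key : ∀ z, z ∉ F → reachSet E F s ⊆ reachSet E F z := by
    intro z hz
    obtain ⟨w, hw1, hw2⟩ := h2 F F hF hF z hz s hsF
    have hsub : reachSet E F w ⊆ reachSet E F s := reachSet_subset_of_mem E F hw2
    have hle : (reachSet E F s).ncard ≤ (reachSet E F w).ncard := by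
      rw [hscard]; exact hmin w hw1.1
    have heq : reachSet E F w = reachSet E F s :=
      Set.eq_of_subset_of_ncard_le hsub hle (Set.toFinite _)
    rw [← heq]
    exact reachSet_subset_of_mem E F hw1
  have hsX : reachSet E F s ⊆ X := Set.subset_inter (key u hu) (key v hv)
  -- pick t outside X and apply h2 with fault sets F and X
  have hXne : X ≠ Set.univ := by
    intro h
    rw [h, Set.ncard_univ, Nat.card_eq_fintype_card] at hXf
    omega
  obtain ⟨t, ht⟩ := (Set.ne_univ_iff_exists_notMem X).mp hXne
  obtain ⟨w, hw1, hw2⟩ := h2 F X hF hXf s hsF t ht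
  exact hw2.1 (hsX hw1)
end

section
/- Suppose the directed graph G = (V,E) satisfies the 3-reach condition with parameter ρ = 1 (i.e., for every F, F1, F2 ⊆ V with |F| ≤ f, |F1| ≤ f, |F2| ≤ f, and every u ∈ V−F−F1 and v ∈ V−F−F2, the sets reach_u(F∪F1) and reach_v(F∪F2) intersect). Then G satisfies the 2-reach condition with parameter ρ = f+1 (i.e., for every F1, F2 ⊆ V with |F1| ≤ f and |F2| ≤ f, and every u ∈ V−F1 and v ∈ V−F2, |reach_u(F1) ∩ reach_v(F2)| ≥ f+1). -/
theorem three_reach_one_implies_two_reach_fplus1 {V : Type*} [Fintype V]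
    (E : V → V → Prop) (f : ℕ) (hf : 0 < f) (hfn : f < Fintype.card V)
    (h3 : ∀ F F1 F2 : Set V, F.ncard ≤ f → F1.ncard ≤ f → F2.ncard ≤ f →
      ∀ u ∉ F ∪ F1, ∀ v ∉ F ∪ F2,
        (reachSet E (F ∪ F1) u ∩ reachSet E (F ∪ F2) v).Nonempty) :
    ∀ F1 F2 : Set V, F1.ncard ≤ f → F2.ncard ≤ f →
      ∀ u ∉ F1, ∀ v ∉ F2,
        f + 1 ≤ (reachSet E F1 u ∩ reachSet E F2 v).ncard := by
  -- monotonicity: enlarging the removed set shrinks the reach set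
  have mono : ∀ (F F' : Set V), F ⊆ F' → ∀ u, reachSet E F' u ⊆ reachSet E F u := by
    intro F F' hFF u w hw
    obtain ⟨hw1, hw2⟩ := hw
    refine ⟨fun hx => hw1 (hFF hx), Relation.ReflTransGen.mono ?_ _ _ hw2⟩
    rintro a b ⟨ha, hb, hab⟩
    exact ⟨fun hx => ha (hFF hx), fun hx => hb (hFF hx), hab⟩
  -- key lemma: every reach set has more than f elements
  have key : ∀ F1 : Set V, F1.ncard ≤ f → ∀ u ∉ F1, f < (reachSet E F1 u).ncard := by
    intro F1 h1 u hu
    by_contra hle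
    push_neg at hle
    set R := reachSet E F1 u with hR
    have huR : u ∈ R := ⟨hu, Relation.ReflTransGen.refl⟩
    have hFcard : (R \ {u}).ncard ≤ f :=
      le_trans (Set.ncard_le_ncard Set.diff_subset R.toFinite) hle
    have hRne : R ≠ Set.univ := by
      intro h
      rw [h, Set.ncard_univ, Nat.card_eq_fintype_card] at hle
      omega
    obtain ⟨v, hv⟩ := (Set.ne_univ_iff_exists_notMem R).mp hRne
    obtain ⟨w, hw1, hw2⟩ := h3 (R \ {u}) F1 R hFcard h1 hle u
      (by
        rintro (h | h)
        · exact h.2 rfl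
        · exact hu h)
      v
      (by
        rintro (h | h)
        · exact hv h.1
        · exact hv h)
    have hwR : w ∈ R := mono F1 _ Set.subset_union_right u hw1
    have hwu : w = u := by
      by_contra hne
      exact hw1.1 (Or.inl ⟨hwR, hne⟩)
    subst hwu
    exact hw2.1 (Or.inr huR)
  intro F1 F2 h1 h2 u hu v hv
  by_contra hle
  push_neg at hle
  set I := reachSet E F1 u ∩ reachSet E F2 v with hIdef
  have hI : I.ncard ≤ f := by omega
  have hns1 : ¬ reachSet E F1 u ⊆ I := by
    intro hs
    have := Set.ncard_le_ncard hs I.toFinite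
    have := key F1 h1 u hu
    omega
  have hns2 : ¬ reachSet E F2 v ⊆ I := by
    intro hs
    have := Set.ncard_le_ncard hs I.toFinite
    have := key F2 h2 v hv
    omega
  obtain ⟨u', hu'R, hu'I⟩ := Set.not_subset.mp hns1
  obtain ⟨v', hv'R, hv'I⟩ := Set.not_subset.mp hns2
  obtain ⟨w, hw1, hw2⟩ := h3 I F1 F2 hI h1 h2 u'
    (by
      rintro (h | h)
      · exact hu'I h
      · exact hu'R.1 h)
    v'
    (by
      rintro (h | h)
      · exact hv'I h
      · exact hv'R.1 h)
  have hwu : w ∈ reachSet E F1 u := by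
    have h' : w ∈ reachSet E F1 u' := mono F1 _ Set.subset_union_right u' hw1
    exact ⟨h'.1, h'.2.trans hu'R.2⟩
  have hwv : w ∈ reachSet E F2 v := by
    have h' : w ∈ reachSet E F2 v' := mono F2 _ Set.subset_union_right v' hw2
    exact ⟨h'.1, h'.2.trans hv'R.2⟩
  exact hw1.1 (Or.inl ⟨hwu, hwv⟩)
end

section
/- Let G = (V,E) be a directed graph on n vertices with 0 < f < n. Suppose that for every F ⊆ V with |F| ≤ f and all u, v ∈ V−F, the sets reach_u(F) and reach_v(F) have nonempty intersection. Then for every F ⊆ V with |F| ≤ f, the induced subgraph G_F has a unique source component. -/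
theorem one_reach_one_implies_unique_source_component {V : Type*} [Fintype V]
    (E : V → V → Prop) (f : ℕ) (hf : 0 < f) (hfn : f < Fintype.card V)
    (h1 : ∀ F : Set V, F.ncard ≤ f → ∀ u ∉ F, ∀ v ∉ F,
      (reachSet E F u ∩ reachSet E F v).Nonempty) :
    ∀ F : Set V, F.ncard ≤ f → ∃! S : Set V, IsSourceComponent E F S := by
  classical
  intro F hF
  -- the complement of F is nonempty
  have hne : ∃ v, v ∉ F := by
    by_contra h
    push_neg at h
    have : F = Set.univ := Set.eq_univ_of_forall h
    rw [this, Set.ncard_univ, Nat.card_eq_fintype_card] at hF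
    omega
  obtain ⟨v0, hv0⟩ := hne
  -- pick v ∉ F minimizing the cardinality of its reach set
  obtain ⟨v, hvmem, hmin⟩ := Finset.exists_min_image
    (Finset.univ.filter (fun x => x ∉ F)) (fun x => (reachSet E F x).ncard)
    ⟨v0, by simp [hv0]⟩
  simp only [Finset.mem_filter, Finset.mem_univ, true_and] at hvmem
  set S : Set V := {w | Relation.ReflTransGen (stepRel E F) v w ∧
                        Relation.ReflTransGen (stepRel E F) w v} with hSdef
  have hsrc : ∀ a ∉ S, ∀ b ∈ S, ¬ stepRel E F a b := by
    intro a ha b hb hab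
    have haF : a ∉ F := hab.1
    have harv : Relation.ReflTransGen (stepRel E F) a v :=
      (Relation.ReflTransGen.single hab).trans hb.2
    have hsub : reachSet E F a ⊆ reachSet E F v := by
      intro w hw
      exact ⟨hw.1, hw.2.trans harv⟩
    have hvnotin : v ∉ reachSet E F a := by
      intro hva
      exact ha ⟨hva.2, harv⟩
    have hss : reachSet E F a ⊂ reachSet E F v :=
      ⟨hsub, fun h => hvnotin (h ⟨hvmem, Relation.ReflTransGen.refl⟩)⟩
    have h2 := Set.ncard_lt_ncard hss (Set.toFinite _)
    have h3 := hmin a (by simp [haF])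
    omega
  -- key: any vertex reaching into a source component lies in it
  have key : ∀ (u : V) (T : Set V),
      T = {w | Relation.ReflTransGen (stepRel E F) u w ∧
               Relation.ReflTransGen (stepRel E F) w u} →
      (∀ a ∉ T, ∀ b ∈ T, ¬ stepRel E F a b) →
      ∀ w, Relation.ReflTransGen (stepRel E F) w u → w ∈ T := by
    intro u T hT hsrcT w hw
    induction hw using Relation.ReflTransGen.head_induction_on with
    | refl => rw [hT]; exact ⟨Relation.ReflTransGen.refl, Relation.ReflTransGen.refl⟩
    | head hstep _ ih =>
        by_contra h
        exact hsrcT _ h _ ih hstep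
  refine ⟨S, ⟨⟨v, hvmem, rfl⟩, hsrc⟩, ?_⟩
  rintro S' ⟨⟨v', hv', hS'eq⟩, hsrc'⟩
  obtain ⟨w, hw1, hw2⟩ := h1 F hF v hvmem v' hv'
  have hwS : w ∈ S := key v S rfl hsrc w hw1.2
  have hwS' : w ∈ S' := key v' S' hS'eq hsrc' w hw2.2
  rw [hS'eq] at hwS' ⊢
  ext x
  simp only [Set.mem_setOf_eq, hSdef]
  constructor
  · rintro ⟨ha, hb⟩
    exact ⟨hwS.1.trans (hwS'.2.trans ha), (hb.trans hwS'.1).trans hwS.2⟩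
  · rintro ⟨ha, hb⟩
    exact ⟨hwS'.1.trans (hwS.2.trans ha), (hb.trans hwS.1).trans hwS'.2⟩
end

section
/- Suppose the directed graph G = (V,E) satisfies the 1-reach condition with parameter ρ = f+1 (i.e., for every F ⊆ V with |F| ≤ f and all u, v ∈ V−F, |reach_u(F) ∩ reach_v(F)| ≥ f+1). Then G satisfies Condition S: for every F ⊆ V with |F| ≤ f, the induced subgraph G_F has a unique source component, and that source component contains at least f+1 vertices. -/
/-- Condition S: for every `F` with `|F| ≤ f`, the graph `G_F` has a unique
source component, and that source component has at least `f+1` vertices. -/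
def ConditionS {V : Type*} (E : V → V → Prop) (f : ℕ) : Prop :=
  ∀ F : Set V, F.ncard ≤ f →
    ∃ S : Set V, IsSourceComponent E F S ∧ f + 1 ≤ S.ncard ∧
      ∀ S' : Set V, IsSourceComponent E F S' → S' = S

/-- A set closed against incoming edges is closed under backward reachability. -/
lemma source_closed {V : Type*} {E : V → V → Prop} {F : Set V} {S : Set V}
    (hS : ∀ a ∉ S, ∀ b ∈ S, ¬ stepRel E F a b) {w b : V}
    (h : Relation.ReflTransGen (stepRel E F) w b) (hb : b ∈ S) : w ∈ S := by
  induction h using Relation.ReflTransGen.head_induction_on with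
  | refl => exact hb
  | head hstep _ ih =>
    by_contra hw
    exact hS _ hw _ ih hstep

theorem one_reach_fplus1_implies_conditionS {V : Type*} [Fintype V]
    (E : V → V → Prop) (f : ℕ) (hf : 0 < f) (hfn : f < Fintype.card V)
    (h1 : ∀ F : Set V, F.ncard ≤ f → ∀ u ∉ F, ∀ v ∉ F,
      f + 1 ≤ (reachSet E F u ∩ reachSet E F v).ncard) :
    ConditionS E f := by
  intro F hF
  classical
  -- V − F is nonempty
  have hFne : (Fᶜ : Set V).Nonempty := by
    by_contra h
    rw [Set.not_nonempty_iff_eq_empty, Set.compl_empty_iff] at h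
    have : F.ncard = Fintype.card V := by
      rw [h, Set.ncard_univ, Nat.card_eq_fintype_card]
    omega
  -- choose v ∉ F minimizing ncard of reachSet
  obtain ⟨v, hvF, hvmin⟩ := Set.exists_min_image (Fᶜ : Set V)
    (fun x => (reachSet E F x).ncard) (Set.toFinite _) hFne
  simp only [Set.mem_compl_iff] at hvF
  set S : Set V := {w | Relation.ReflTransGen (stepRel E F) v w ∧
                     Relation.ReflTransGen (stepRel E F) w v} with hSdef
  -- reach sets of vertices reaching v equal reach of v
  have hreach_eq : ∀ w ∈ reachSet E F v, reachSet E F w = reachSet E F v := by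
    intro w hw
    obtain ⟨hwF, hwv⟩ := hw
    have hsub : reachSet E F w ⊆ reachSet E F v := by
      intro x ⟨hxF, hxw⟩
      exact ⟨hxF, hxw.trans hwv⟩
    have := hvmin w hwF
    exact Set.eq_of_subset_of_ncard_le hsub this (Set.toFinite _)
  have hrsub : reachSet E F v ⊆ S := by
    intro w hw
    have heq := hreach_eq w hw
    have hvmem : v ∈ reachSet E F w := heq ▸ ⟨hvF, Relation.ReflTransGen.refl⟩
    exact ⟨hvmem.2, hw.2⟩
  have hsrc : ∀ a ∉ S, ∀ b ∈ S, ¬ stepRel E F a b := by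
    intro a haS b hbS hab
    apply haS
    apply hrsub
    exact ⟨hab.1, (Relation.ReflTransGen.single hab).trans hbS.2⟩
  have hiscomp : IsSourceComponent E F S := ⟨⟨v, hvF, rfl⟩, hsrc⟩
  have hcard : f + 1 ≤ S.ncard := by
    have := h1 F hF v hvF v hvF
    rw [Set.inter_self] at this
    exact this.trans (Set.ncard_le_ncard hrsub (Set.toFinite _))
  refine ⟨S, hiscomp, hcard, ?_⟩
  rintro S' ⟨⟨v', hv'F, rfl⟩, hsrc'⟩
  -- intersection of reach sets is nonempty
  have hne : (reachSet E F v ∩ reachSet E F v').Nonempty := by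
    have := h1 F hF v hvF v' hv'F
    exact Set.nonempty_of_ncard_ne_zero (by omega)
  obtain ⟨w, ⟨hwF, hwv⟩, ⟨-, hwv'⟩⟩ := hne
  have hwS : w ∈ S := hrsub ⟨hwF, hwv⟩
  have hwS' : w ∈ {x | Relation.ReflTransGen (stepRel E F) v' x ∧
      Relation.ReflTransGen (stepRel E F) x v'} :=
    source_closed hsrc' hwv' ⟨Relation.ReflTransGen.refl, Relation.ReflTransGen.refl⟩
  obtain ⟨hvw, hwv2⟩ := hwS
  obtain ⟨hv'w, hwv'2⟩ := hwS'
  ext x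
  constructor
  · rintro ⟨hv'x, hxv'⟩
    exact ⟨hvw.trans (hwv'2.trans hv'x), hxv'.trans (hv'w.trans hwv2)⟩
  · rintro ⟨hvx, hxv⟩
    exact ⟨hv'w.trans (hwv2.trans hvx), hxv.trans (hvw.trans hwv'2)⟩
end

section
/- Suppose the directed graph G = (V,E) satisfies Condition S: for every F ⊆ V with |F| ≤ f, the induced subgraph G_F has a unique source component, and that source component contains at least f+1 vertices. Then G satisfies the 1-reach condition with parameter ρ = f+1: for every F ⊆ V with |F| ≤ f and all u, v ∈ V−F, |reach_u(F) ∩ reach_v(F)| ≥ f+1. -/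
theorem conditionS_implies_one_reach_fplus1 {V : Type*} [Fintype V]
    (E : V → V → Prop) (f : ℕ) (hf : 0 < f) (hfn : f < Fintype.card V)
    (hCS : ConditionS E f) :
    ∀ F : Set V, F.ncard ≤ f → ∀ u ∉ F, ∀ v ∉ F,
      f + 1 ≤ (reachSet E F u ∩ reachSet E F v).ncard := by
  classical
  intro F hF u₀ hu₀ v₀ hv₀
  -- Key claim: the unique source component is contained in every reach set.
  have key : ∀ S : Set V, IsSourceComponent E F S → (∀ S' : Set V,
      IsSourceComponent E F S' → S' = S) → ∀ u ∉ F, S ⊆ reachSet E F u := by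
    intro S hS huniq u hu
    set R := Relation.ReflTransGen (stepRel E F) with hR
    -- pick w reaching u minimizing the number of vertices that reach w
    obtain ⟨w, ⟨hwF, hwu⟩, hwmin⟩ :=
      Set.exists_min_image {w | w ∉ F ∧ R w u}
        (fun w => {x | R x w}.ncard) (Set.toFinite _) ⟨u, hu, Relation.ReflTransGen.refl⟩
    have hmin : ∀ a, R a w → R w a := by
      intro a haw
      by_contra hwa
      have haF : a ∉ F := by
        rcases Relation.ReflTransGen.cases_head haw with h | ⟨c, hac, _⟩
        · exact h ▸ hwF
        · exact hac.1
      have hle := hwmin a ⟨haF, haw.trans hwu⟩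
      have hss : {x | R x a} ⊂ {x | R x w} := by
        constructor
        · intro x hx; exact hx.trans haw
        · intro hsub
          exact hwa (hsub (show R w w from Relation.ReflTransGen.refl))
      have := Set.ncard_lt_ncard hss (Set.toFinite _)
      omega
    -- the class of w is a source component
    set C : Set V := {x | R w x ∧ R x w} with hC
    have hCsrc : IsSourceComponent E F C := by
      refine ⟨⟨w, hwF, rfl⟩, ?_⟩
      rintro a haC b ⟨hbw, hbw'⟩ hab
      exact haC ⟨hmin a (Relation.ReflTransGen.single hab |>.trans hbw'),
        (Relation.ReflTransGen.single hab).trans hbw'⟩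
    have hCS' : C = S := huniq C hCsrc
    intro s hs
    rw [← hCS'] at hs
    obtain ⟨hws, hsw⟩ := hs
    have hsF : s ∉ F := by
      rcases (Relation.ReflTransGen.cases_tail hws) with h | ⟨c, _, hcs⟩
      · exact h ▸ hwF
      · exact hcs.2.1
    exact ⟨hsF, hsw.trans hwu⟩
  obtain ⟨S, hS, hcard, huniq⟩ := hCS F hF
  have h1 : S ⊆ reachSet E F u₀ ∩ reachSet E F v₀ :=
    fun s hs => ⟨key S hS huniq u₀ hu₀ hs, key S hS huniq v₀ hv₀ hs⟩
  exact hcard.trans (Set.ncard_le_ncard h1 (Set.toFinite _))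
end

section
/- Suppose the directed graph G = (V,E) satisfies the 2-reach condition with parameter ρ = f+1 (i.e., for every F1, F2 ⊆ V with |F1| ≤ f and |F2| ≤ f, and every u ∈ V−F1 and v ∈ V−F2, |reach_u(F1) ∩ reach_v(F2)| ≥ f+1). Then G satisfies Condition A: for every F ⊆ V with |F| ≤ f, the induced subgraph G_F has a unique source component S_F with |S_F| ≥ 2f+1, and for every F, F' ⊆ V with |F| ≤ f and |F'| ≤ f, |S_F ∩ S_{F'}| ≥ f+1. -/
/-- Condition A: for every `F` with `|F| ≤ f`, the graph `G_F` has a unique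
source component `S_F` with `|S_F| ≥ 2f+1`, and the source components
corresponding to any two such sets `F`, `F'` intersect in at least `f+1`
vertices. -/
def ConditionA {V : Type*} (E : V → V → Prop) (f : ℕ) : Prop :=
  (∀ F : Set V, F.ncard ≤ f →
    ∃ S : Set V, IsSourceComponent E F S ∧ 2 * f + 1 ≤ S.ncard ∧
      ∀ S' : Set V, IsSourceComponent E F S' → S' = S) ∧
  (∀ F F' : Set V, F.ncard ≤ f → F'.ncard ≤ f →
    ∀ S S' : Set V, IsSourceComponent E F S → IsSourceComponent E F' S' →
      f + 1 ≤ (S ∩ S').ncard)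


private lemma notF_of_reach {V : Type*} {E : V → V → Prop} {F : Set V} {w u : V}
    (h : Relation.ReflTransGen (stepRel E F) w u) (hu : u ∉ F) : w ∉ F := by
  induction h using Relation.ReflTransGen.head_induction_on with
  | refl => exact hu
  | head h _ _ => exact h.1

/-- A source component equals the reach set of any representative. -/
private lemma source_eq_reach {V : Type*} {E : V → V → Prop} {F : Set V} {S : Set V} {v : V}
    (hv : v ∉ F)
    (hS : S = {w | Relation.ReflTransGen (stepRel E F) v w ∧
                   Relation.ReflTransGen (stepRel E F) w v})
    (hsrc : ∀ a ∉ S, ∀ b ∈ S, ¬ stepRel E F a b) :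
    S = reachSet E F v := by
  have hvS : v ∈ S := by rw [hS]; exact ⟨.refl, .refl⟩
  have key : ∀ w, Relation.ReflTransGen (stepRel E F) w v → w ∈ S := by
    intro w hw
    induction hw using Relation.ReflTransGen.head_induction_on with
    | refl => exact hvS
    | head h _ ih =>
      by_contra ha
      exact hsrc _ ha _ ih h
  ext w
  constructor
  · intro hw
    have h := hS ▸ hw
    exact ⟨notF_of_reach h.2 hv, h.2⟩
  · intro hw
    exact key w hw.2

private lemma class_eq_of_mem {V : Type*} {r : V → V → Prop} {v v' w : V}
    (h1 : Relation.ReflTransGen r v w ∧ Relation.ReflTransGen r w v)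
    (h2 : Relation.ReflTransGen r v' w ∧ Relation.ReflTransGen r w v') :
    {x | Relation.ReflTransGen r v x ∧ Relation.ReflTransGen r x v} =
    {x | Relation.ReflTransGen r v' x ∧ Relation.ReflTransGen r x v'} := by
  have hvv' : Relation.ReflTransGen r v v' := h1.1.trans h2.2
  have hv'v : Relation.ReflTransGen r v' v := h2.1.trans h1.2
  ext x
  exact ⟨fun hx => ⟨hv'v.trans hx.1, hx.2.trans hvv'⟩,
         fun hx => ⟨hvv'.trans hx.1, hx.2.trans hv'v⟩⟩

/-- Existence of a source component whenever `V − F` is nonempty. -/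
private lemma exists_source {V : Type*} [Fintype V] (E : V → V → Prop) (F : Set V)
    (hne : {u : V | u ∉ F}.Nonempty) :
    ∃ v ∉ F, IsSourceComponent E F
      {w | Relation.ReflTransGen (stepRel E F) v w ∧
           Relation.ReflTransGen (stepRel E F) w v} := by
  obtain ⟨v, hv, hmin⟩ := Set.exists_min_image {u : V | u ∉ F}
      (fun u => (reachSet E F u).ncard) (Set.toFinite _) hne
  refine ⟨v, hv, ⟨v, hv, rfl⟩, ?_⟩
  intro a ha b hb hab
  have haF : a ∉ F := hab.1
  have hbv : Relation.ReflTransGen (stepRel E F) b v := hb.2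
  have hav : Relation.ReflTransGen (stepRel E F) a v :=
    (Relation.ReflTransGen.single hab).trans hbv
  have hsub : reachSet E F a ⊆ reachSet E F v := fun w hw => ⟨hw.1, hw.2.trans hav⟩
  have hvnot : v ∉ reachSet E F a := by
    intro hva
    exact ha ⟨hva.2, hav⟩
  have hss : reachSet E F a ⊂ reachSet E F v :=
    ⟨hsub, fun h => hvnot (h ⟨hv, .refl⟩)⟩
  have := Set.ncard_lt_ncard hss (Set.toFinite _)
  exact absurd (hmin a haF) (by omega)

theorem two_reach_fplus1_implies_conditionA {V : Type*} [Fintype V]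
    (E : V → V → Prop) (f : ℕ) (hf : 0 < f) (hfn : f < Fintype.card V)
    (h2 : ∀ F1 F2 : Set V, F1.ncard ≤ f → F2.ncard ≤ f →
      ∀ u ∉ F1, ∀ v ∉ F2,
        f + 1 ≤ (reachSet E F1 u ∩ reachSet E F2 v).ncard) :
    ConditionA E f := by
  -- every set avoiding at most f vertices leaves something outside
  have hout : ∀ F : Set V, F.ncard ≤ f → {u : V | u ∉ F}.Nonempty := by
    intro F hF
    by_contra h
    rw [Set.not_nonempty_iff_eq_empty] at h
    have hFu : F = Set.univ := by
      ext x; simp only [Set.mem_univ, iff_true]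
      by_contra hx
      have : x ∈ {u : V | u ∉ F} := hx
      simp [h] at this
    rw [hFu, Set.ncard_univ, Nat.card_eq_fintype_card] at hF
    omega
  -- any source component equals the reach set of its representative
  have hselect : ∀ (F : Set V) (S : Set V), IsSourceComponent E F S →
      ∃ v ∉ F, S = reachSet E F v ∧
        S = {w | Relation.ReflTransGen (stepRel E F) v w ∧
                 Relation.ReflTransGen (stepRel E F) w v} := by
    rintro F S ⟨⟨v, hv, hSeq⟩, hsrc⟩
    exact ⟨v, hv, source_eq_reach hv hSeq hsrc, hSeq⟩
  constructor
  · intro F hF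
    obtain ⟨v, hvF, hsc⟩ := exists_source E F (hout F hF)
    set S : Set V := {w | Relation.ReflTransGen (stepRel E F) v w ∧
                          Relation.ReflTransGen (stepRel E F) w v} with hSdef
    obtain ⟨v₀, hv₀F, hSr, hScl⟩ := hselect F S hsc
    have hv₀S : v₀ ∈ S := by
      rw [hScl]; exact ⟨.refl, .refl⟩
    refine ⟨S, hsc, ?_, ?_⟩
    · -- size at least 2f+1
      by_contra hlt
      push_neg at hlt
      have hn : S.ncard ≤ 2 * f := by omega
      have hv₀mem : v₀ ∈ S := hv₀S
      have hcard1 : (S \ {v₀}).ncard = S.ncard - 1 :=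
        Set.ncard_diff_singleton_of_mem hv₀mem
      have hSpos : 1 ≤ S.ncard := (Set.ncard_pos (Set.toFinite _)).2 ⟨v₀, hv₀mem⟩
      obtain ⟨B, hBsub, hBcard⟩ : ∃ B ⊆ S \ {v₀}, B.ncard = S.ncard - f := by
        apply Set.exists_subset_card_eq
        rw [hcard1]; omega
      have hBf : B.ncard ≤ f := by omega
      have hv₀B : v₀ ∉ B := fun h => (hBsub h).2 rfl
      have hkey := h2 F B hF hBf v₀ hv₀F v₀ hv₀B
      have hsub2 : reachSet E F v₀ ∩ reachSet E B v₀ ⊆ S \ B := by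
        rintro x ⟨hx1, hx2⟩
        exact ⟨hSr ▸ hx1, hx2.1⟩
      have hBS : B ⊆ S := hBsub.trans Set.diff_subset
      have hdiff : (S \ B).ncard = S.ncard - B.ncard :=
        Set.ncard_diff hBS (Set.toFinite _)
      have hle : (reachSet E F v₀ ∩ reachSet E B v₀).ncard ≤ (S \ B).ncard :=
        Set.ncard_le_ncard hsub2 (Set.toFinite _)
      omega
    · -- uniqueness
      intro S' hS'
      obtain ⟨v', hv'F, hS'r, hS'cl⟩ := hselect F S' hS'
      have hkey := h2 F F hF hF v₀ hv₀F v' hv'F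
      have hpos : (reachSet E F v₀ ∩ reachSet E F v').ncard ≠ 0 := by omega
      obtain ⟨w, hw1, hw2⟩ := Set.nonempty_of_ncard_ne_zero hpos
      have hwS : w ∈ S := hSr ▸ hw1
      have hwS' : w ∈ S' := hS'r ▸ hw2
      rw [hScl] at hwS
      rw [hS'cl] at hwS'
      rw [hS'cl, hScl]
      exact class_eq_of_mem hwS' hwS
  · intro F F' hF hF' S S' hS hS'
    obtain ⟨v, hvF, hSr, -⟩ := hselect F S hS
    obtain ⟨v', hv'F, hS'r, -⟩ := hselect F' S' hS'
    rw [hSr, hS'r]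
    exact h2 F F' hF hF' v hvF v' hv'F
end

section
/- Suppose the directed graph G = (V,E) satisfies Condition A: for every F ⊆ V with |F| ≤ f, the induced subgraph G_F has a unique source component S_F with |S_F| ≥ 2f+1, and for every F, F' ⊆ V with |F| ≤ f and |F'| ≤ f, |S_F ∩ S_{F'}| ≥ f+1. Then G satisfies the 2-reach condition with parameter ρ = f+1: for every F1, F2 ⊆ V with |F1| ≤ f and |F2| ≤ f, and every u ∈ V−F1 and v ∈ V−F2, |reach_u(F1) ∩ reach_v(F2)| ≥ f+1. -/
lemma notF_of_path {V : Type*} {E : V → V → Prop} {F : Set V} {x w : V}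
    (h : Relation.ReflTransGen (stepRel E F) x w) (hw : w ∉ F) : x ∉ F := by
  rcases h.cases_head with rfl | ⟨y, hxy, _⟩
  · exact hw
  · exact hxy.1

/-- Every vertex outside `F` is reached by a source component; combined with
uniqueness, the unique source component is contained in every reach set. -/
lemma exists_source_in_reach {V : Type*} [Fintype V] (E : V → V → Prop) (F : Set V)
    (u : V) (hu : u ∉ F) :
    ∃ S : Set V, IsSourceComponent E F S ∧ S ⊆ reachSet E F u := by
  classical
  obtain ⟨w, hwmem, hwmin⟩ := Set.exists_min_image (reachSet E F u)
    (fun x => (reachSet E F x).ncard) (Set.toFinite _) ⟨u, hu, .refl⟩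
  obtain ⟨hwF, hwu⟩ := hwmem
  refine ⟨{x | Relation.ReflTransGen (stepRel E F) w x ∧
               Relation.ReflTransGen (stepRel E F) x w}, ⟨⟨w, hwF, rfl⟩, ?_⟩, ?_⟩
  · rintro a ha b ⟨hwb, hbw⟩ hab
    have haw : Relation.ReflTransGen (stepRel E F) a w := .head hab hbw
    have haF : a ∉ F := hab.1
    have hamem : a ∈ reachSet E F u := ⟨haF, haw.trans hwu⟩
    have hsub : reachSet E F a ⊆ reachSet E F w := by
      rintro x ⟨hxF, hxa⟩
      exact ⟨hxF, hxa.trans haw⟩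
    have heq : reachSet E F a = reachSet E F w :=
      Set.eq_of_subset_of_ncard_le hsub (hwmin a hamem) (Set.toFinite _)
    have hwa : w ∈ reachSet E F a := heq ▸ (⟨hwF, .refl⟩ : w ∈ reachSet E F w)
    exact ha ⟨hwa.2, haw⟩
  · rintro x ⟨hwx, hxw⟩
    exact ⟨notF_of_path hxw hwF, hxw.trans hwu⟩

theorem conditionA_implies_two_reach_fplus1 {V : Type*} [Fintype V]
    (E : V → V → Prop) (f : ℕ) (hf : 0 < f) (hfn : f < Fintype.card V)
    (hCA : ConditionA E f) :
    ∀ F1 F2 : Set V, F1.ncard ≤ f → F2.ncard ≤ f →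
      ∀ u ∉ F1, ∀ v ∉ F2,
        f + 1 ≤ (reachSet E F1 u ∩ reachSet E F2 v).ncard := by
  intro F1 F2 hF1 hF2 u hu v hv
  obtain ⟨S1, hS1, hS1sub⟩ := exists_source_in_reach E F1 u hu
  obtain ⟨S2, hS2, hS2sub⟩ := exists_source_in_reach E F2 v hv
  have hcard := hCA.2 F1 F2 hF1 hF2 S1 S2 hS1 hS2
  calc f + 1 ≤ (S1 ∩ S2).ncard := hcard
    _ ≤ (reachSet E F1 u ∩ reachSet E F2 v).ncard :=
      Set.ncard_le_ncard (Set.inter_subset_inter hS1sub hS2sub) (Set.toFinite _)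
end

section
/- Suppose the directed graph G = (V,E) satisfies Condition S. Let F ⊆ V with |F| ≤ f, and let S_F be the unique source component of G_F. Then from each node in S_F to each node in V there exists a directed path in G whose internal nodes (nodes other than the first and the last node of the path) all lie in V−F. -/
/-- There is a directed path in `G` from `a` to `b` all of whose internal
nodes (nodes other than the first and the last node) avoid `F`. -/
def PathAvoidingInternal {V : Type*} (E : V → V → Prop) (F : Set V) (a b : V) : Prop :=
  a = b ∨ E a b ∨
    ∃ c d : V, c ∉ F ∧ d ∉ F ∧ E a c ∧
      Relation.ReflTransGen (stepRel E F) c d ∧ E d b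

/-- Every vertex outside `F` is reachable (in `G_F`) from some vertex whose
strongly connected component is a source component. -/
lemma exists_source_anc {V : Type*} [Fintype V] (E : V → V → Prop) (F : Set V) :
    ∀ n (x : V), x ∉ F →
      ({z | Relation.ReflTransGen (stepRel E F) z x}).ncard ≤ n →
      ∃ s, s ∉ F ∧
        IsSourceComponent E F
          {w | Relation.ReflTransGen (stepRel E F) s w ∧
               Relation.ReflTransGen (stepRel E F) w s} ∧
        Relation.ReflTransGen (stepRel E F) s x := by
  intro n
  induction n with
  | zero =>
    intro x hx h
    exfalso
    have hpos : 0 < ({z | Relation.ReflTransGen (stepRel E F) z x}).ncard :=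
      (Set.ncard_pos (Set.toFinite _)).mpr ⟨x, Relation.ReflTransGen.refl⟩
    omega
  | succ n ih =>
    intro x hx hcard
    by_cases hsrc : ∀ a ∉ {w | Relation.ReflTransGen (stepRel E F) x w ∧
        Relation.ReflTransGen (stepRel E F) w x},
        ∀ b ∈ {w | Relation.ReflTransGen (stepRel E F) x w ∧
        Relation.ReflTransGen (stepRel E F) w x}, ¬ stepRel E F a b
    · exact ⟨x, hx, ⟨⟨x, hx, rfl⟩, hsrc⟩, Relation.ReflTransGen.refl⟩
    · push_neg at hsrc
      obtain ⟨a, ha, b, hb, hab⟩ := hsrc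
      have hax : Relation.ReflTransGen (stepRel E F) a x :=
        (Relation.ReflTransGen.single hab).trans hb.2
      have hxa : ¬ Relation.ReflTransGen (stepRel E F) x a := fun h => ha ⟨h, hax⟩
      have hss : {z | Relation.ReflTransGen (stepRel E F) z a} ⊂
          {z | Relation.ReflTransGen (stepRel E F) z x} := by
        constructor
        · exact fun z hz => hz.trans hax
        · intro hsub
          exact hxa (hsub (Relation.ReflTransGen.refl))
      have hlt : ({z | Relation.ReflTransGen (stepRel E F) z a}).ncard <
          ({z | Relation.ReflTransGen (stepRel E F) z x}).ncard :=
        Set.ncard_lt_ncard hss (Set.toFinite _)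
      obtain ⟨s, hsF, hsrcS, hsa⟩ := ih a hab.1 (by omega)
      exact ⟨s, hsF, hsrcS, hsa.trans hax⟩

theorem source_component_reaches_all_avoiding_internal {V : Type*} [Fintype V]
    (E : V → V → Prop) (f : ℕ) (hf : 0 < f) (hfn : f < Fintype.card V)
    (hCS : ConditionS E f) (F : Set V) (hF : F.ncard ≤ f)
    (S : Set V) (hS : IsSourceComponent E F S) :
    ∀ u ∈ S, ∀ w : V, PathAvoidingInternal E F u w := by
  obtain ⟨S₀, hS₀, hcard, huniq⟩ := hCS F hF
  have hSS : S = S₀ := huniq S hS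
  obtain ⟨⟨v, hv, hSdef⟩, hsrc0⟩ := hS₀
  intro u hu w
  have hu0 : u ∈ S₀ := hSS ▸ hu
  have huv : Relation.ReflTransGen (stepRel E F) u v := by
    rw [hSdef] at hu0; exact hu0.2
  have key : ∀ x, x ∉ F → Relation.ReflTransGen (stepRel E F) u x := by
    intro x hx
    obtain ⟨s, hsF, hsrcS, hsx⟩ := exists_source_anc E F
      (({z | Relation.ReflTransGen (stepRel E F) z x}).ncard) x hx le_rfl
    have heq := huniq _ hsrcS
    have hs0 : s ∈ S₀ := heq ▸ ⟨Relation.ReflTransGen.refl, Relation.ReflTransGen.refl⟩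
    have hvs : Relation.ReflTransGen (stepRel E F) v s := by
      rw [hSdef] at hs0; exact hs0.1
    exact (huv.trans hvs).trans hsx
  by_cases hwF : w ∈ F
  · -- `w ∈ F`: find an in-neighbor `d ∉ F` of `w`
    have hd : ∃ d, d ∉ F ∧ E d w := by
      by_contra hno
      push_neg at hno
      set F' := F \ {w} with hF'def
      have hF' : F'.ncard ≤ f :=
        le_trans (Set.ncard_le_ncard Set.diff_subset (Set.toFinite _)) hF
      obtain ⟨S', hS', hcard', huniq'⟩ := hCS F' hF'
      have hwF' : w ∉ F' := fun h => h.2 rfl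
      have hreach : ∀ z, Relation.ReflTransGen (stepRel E F') z w → z = w := by
        intro z hz
        induction hz using Relation.ReflTransGen.head_induction_on with
        | refl => rfl
        | @head a c hstep htail ih =>
          subst ih
          obtain ⟨haF', hwF'2, haw⟩ := hstep
          by_cases haF : a ∈ F
          · by_contra hne
            exact haF' ⟨haF, hne⟩
          · exact absurd haw (hno _ haF)
      have hsingle : IsSourceComponent E F' {w} := by
        constructor
        · refine ⟨w, hwF', ?_⟩
          ext z
          constructor
          · rintro rfl
            exact ⟨Relation.ReflTransGen.refl, Relation.ReflTransGen.refl⟩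
          · rintro ⟨_, hzw⟩
            exact hreach z hzw
        · rintro a ha b rfl hab
          obtain ⟨haF', _, haw⟩ := hab
          by_cases haF : a ∈ F
          · exact ha (by by_contra hne; exact haF' ⟨haF, hne⟩)
          · exact hno a haF haw
      rw [← huniq' {w} hsingle, Set.ncard_singleton] at hcard'
      omega
    obtain ⟨d, hdF, hdw⟩ := hd
    have hud := key d hdF
    rcases hud.cases_head with rfl | ⟨c, huc, hcd⟩
    · exact Or.inr (Or.inl hdw)
    · exact Or.inr (Or.inr ⟨c, d, huc.2.1, hdF, huc.2.2, hcd, hdw⟩)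
  · have huw := key w hwF
    rcases huw.cases_head with rfl | ⟨c, huc, hcw⟩
    · exact Or.inl rfl
    · rcases hcw.cases_tail with rfl | ⟨d, hcd, hdw⟩
      · exact Or.inr (Or.inl huc.2.2)
      · exact Or.inr (Or.inr ⟨c, d, huc.2.1, hdw.1, huc.2.2, hcd, hdw.2.2⟩)
end

section
/- Suppose the directed graph G = (V,E) satisfies Condition S. Let F ⊆ V be nonempty with |F| ≤ f. Then every node w ∈ F has an incoming edge from some node of V−F, i.e., there exists u ∈ V−F with (u,w) ∈ E. -/
theorem every_F_node_has_incoming_from_outside {V : Type*} [Fintype V]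
    (E : V → V → Prop) (f : ℕ) (hf : 0 < f) (hfn : f < Fintype.card V)
    (hCS : ConditionS E f) (F : Set V) (hFne : F.Nonempty) (hF : F.ncard ≤ f) :
    ∀ w ∈ F, ∃ u ∉ F, E u w := by
  intro w hw
  by_contra hno
  push_neg at hno
  set F' := F \ {w} with hF'
  have hwF' : w ∉ F' := by simp [hF']
  have hF'card : F'.ncard ≤ f :=
    le_trans (Set.ncard_le_ncard Set.diff_subset F.toFinite) hF
  obtain ⟨S, hS, hcard, huniq⟩ := hCS F' hF'card
  -- anything reaching w in G_{F'} must be w itself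
  have hreach : ∀ x, Relation.ReflTransGen (stepRel E F') x w → x = w := by
    intro x hx
    induction hx using Relation.ReflTransGen.head_induction_on with
    | refl => rfl
    | head hstep _ ih =>
      rename_i a c _
      obtain ⟨haF', -, hE⟩ := hstep
      rw [ih] at hE
      by_cases haw : a = w
      · exact haw
      · exact absurd hE (hno a (fun haF => haF' ⟨haF, haw⟩))
  have hsrc : IsSourceComponent E F' {w} := by
    constructor
    · refine ⟨w, hwF', ?_⟩
      ext x
      simp only [Set.mem_setOf_eq, Set.mem_singleton_iff]
      constructor
      · rintro rfl; exact ⟨Relation.ReflTransGen.refl, Relation.ReflTransGen.refl⟩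
      · rintro ⟨-, h2⟩; exact hreach x h2
    · rintro a ha b hb hstep
      rw [Set.mem_singleton_iff] at hb
      subst hb
      obtain ⟨haF', -, hE⟩ := hstep
      exact ha (hreach a (Relation.ReflTransGen.single ⟨haF', hwF', hE⟩))
  have := huniq {w} hsrc
  rw [← this, Set.ncard_singleton] at hcard
  omega
end

section
/- Suppose the directed graph G = (V,E) satisfies Condition S. Suppose F ⊆ V with |F| = f, and the unique source component S_F of G_F contains exactly f+p nodes, where 0 < p ≤ f. Then for every integer k with p ≤ k ≤ f, every subset F1 ⊆ F of size k has at least k+1 outgoing neighbors in S_F, i.e., |{ y ∈ S_F : ∃ x ∈ F1, (x,y) ∈ E }| ≥ k+1. -/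
theorem subset_of_F_has_many_outgoing_neighbors {V : Type*} [Fintype V]
    (E : V → V → Prop) (f p : ℕ) (hf : 0 < f) (hfn : f < Fintype.card V)
    (hCS : ConditionS E f) (F : Set V) (hF : F.ncard = f)
    (S : Set V) (hS : IsSourceComponent E F S) (hScard : S.ncard = f + p)
    (hp0 : 0 < p) (hpf : p ≤ f) :
    ∀ k : ℕ, p ≤ k → k ≤ f → ∀ F1 ⊆ F, F1.ncard = k →
      k + 1 ≤ {y ∈ S | ∃ x ∈ F1, E x y}.ncard := by
  intro k hpk hkf F1 hF1sub hF1card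
  by_contra hcon
  push_neg at hcon
  set N := {y ∈ S | ∃ x ∈ F1, E x y} with hNdef
  have hNcard : N.ncard ≤ k := Nat.lt_succ_iff.mp hcon
  have hNS : N ⊆ S := fun y hy => hy.1
  have hkS : k ≤ S.ncard := by omega
  obtain ⟨M, hNM, hMS, hMcard⟩ := Set.exists_subsuperset_card_eq hNS hNcard hkS
  set F' := (F \ F1) ∪ M with hF'def
  -- S is disjoint from F
  obtain ⟨v₀, hv₀F, hSeq⟩ := hS.1
  have hSnF : ∀ w ∈ S, w ∉ F := by
    intro w hw
    rw [hSeq] at hw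
    rcases (Relation.ReflTransGen.cases_head hw.2) with h | ⟨c, hc, _⟩
    · rw [h]; exact hv₀F
    · exact hc.1
  have hF'card : F'.ncard ≤ f := by
    have h1 : (F \ F1).ncard = f - k := by
      rw [Set.ncard_diff hF1sub (Set.toFinite F1), hF, hF1card]
    calc F'.ncard ≤ (F \ F1).ncard + M.ncard := Set.ncard_union_le _ _
    _ = (f - k) + k := by rw [h1, hMcard]
    _ ≤ f := by omega
  set C := S \ M with hCdef
  have hCcard : C.ncard = f + p - k := by
    rw [hCdef, Set.ncard_diff hMS (Set.toFinite M), hScard, hMcard]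
  have hCne : C.Nonempty := Set.nonempty_of_ncard_ne_zero (by omega)
  have hCF' : ∀ w ∈ C, w ∉ F' := by
    rintro w hw (h | h)
    · exact hSnF w hw.1 h.1
    · exact hw.2 h
  have hClosed : ∀ a b, stepRel E F' a b → b ∈ C → a ∈ C := by
    intro a b hab hb
    by_cases haS : a ∈ S
    · exact ⟨haS, fun haM => hab.1 (Or.inr haM)⟩
    · by_cases haF : a ∈ F
      · have haF1 : a ∈ F1 := by
          by_contra h'
          exact hab.1 (Or.inl ⟨haF, h'⟩)
        have hbN : b ∈ N := ⟨hb.1, a, haF1, hab.2.2⟩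
        exact absurd (hNM hbN) hb.2
      · exact absurd ⟨haF, hSnF b hb.1, hab.2.2⟩ (hS.2 a haS b hb.1)
  have hPathClosed : ∀ a b, Relation.ReflTransGen (stepRel E F') a b → b ∈ C → a ∈ C := by
    intro a b hab hb
    induction hab using Relation.ReflTransGen.head_induction_on with
    | refl => exact hb
    | head h _ ih => exact hClosed _ _ h ih
  obtain ⟨v, hvC, hvmin⟩ := Set.exists_min_image C
    (fun w => {u | Relation.ReflTransGen (stepRel E F') u w}.ncard)
    (Set.toFinite C) hCne
  have hvsym : ∀ w, Relation.ReflTransGen (stepRel E F') w v →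
      Relation.ReflTransGen (stepRel E F') v w := by
    intro w hwv
    by_contra hvw
    have hwC : w ∈ C := hPathClosed _ _ hwv hvC
    have hsub : {u | Relation.ReflTransGen (stepRel E F') u w} ⊂
        {u | Relation.ReflTransGen (stepRel E F') u v} := by
      constructor
      · intro u hu
        exact hu.trans hwv
      · intro hsub'
        exact hvw (hsub' Relation.ReflTransGen.refl)
    have h1 := Set.ncard_lt_ncard hsub (Set.toFinite _)
    have h2 := hvmin w hwC
    omega
  set S₀ := {w | Relation.ReflTransGen (stepRel E F') v w ∧
                 Relation.ReflTransGen (stepRel E F') w v} with hS₀def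
  have hS₀src : IsSourceComponent E F' S₀ := by
    constructor
    · exact ⟨v, hCF' v hvC, rfl⟩
    · intro a ha b hb hab
      exact ha ⟨hvsym a (Relation.ReflTransGen.head hab hb.2),
                Relation.ReflTransGen.head hab hb.2⟩
  have hS₀C : S₀ ⊆ C := fun w hw => hPathClosed _ _ hw.2 hvC
  obtain ⟨Sh, _, hShcard, huniq⟩ := hCS F' hF'card
  have heq := huniq S₀ hS₀src
  rw [← heq] at hShcard
  have hle : S₀.ncard ≤ C.ncard := Set.ncard_le_ncard hS₀C (Set.toFinite C)
  omega
end

section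
/- Suppose the directed graph G = (V,E) satisfies Condition S. Suppose F ⊆ V with |F| = f, and the unique source component S_F of G_F contains exactly f+p nodes, where 0 < p ≤ f. Let F1 ⊆ F be any subset of size k, where p ≤ k ≤ f. Then in the bipartite graph with parts F and S_F whose edges are the edges of E directed from F to S_F, there exists a matching of size at least k−p+1 consisting of edges from F1 to S_F (i.e., there exist k−p+1 edges (x_i, y_i) ∈ E with x_i ∈ F1, y_i ∈ S_F, the x_i pairwise distinct and the y_i pairwise distinct). -/
open Relation

section Aux
variable {V : Type*}

lemma source_not_mem {E : V → V → Prop} {F S : Set V}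
    (hS : IsSourceComponent E F S) : ∀ w ∈ S, w ∉ F := by
  obtain ⟨⟨v, hv, rfl⟩, -⟩ := hS
  intro w hw
  rcases hw.2.cases_head with h | ⟨c, hc, -⟩
  · exact h ▸ hv
  · exact hc.1

lemma mem_of_reach {E : V → V → Prop} {F' C : Set V}
    (hclosed : ∀ a ∉ C, ∀ b ∈ C, ¬ stepRel E F' a b)
    {w v : V} (h : ReflTransGen (stepRel E F') w v) (hv : v ∈ C) : w ∈ C := by
  induction h using ReflTransGen.head_induction_on with
  | refl => exact hv
  | head hstep _ ih =>
    by_contra ha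
    exact hclosed _ ha _ ih hstep

lemma exists_source_in_closed [Fintype V] (E : V → V → Prop) (F' C : Set V)
    (hne : C.Nonempty) (hdisj : ∀ c ∈ C, c ∉ F')
    (hclosed : ∀ a ∉ C, ∀ b ∈ C, ¬ stepRel E F' a b) :
    ∃ S', IsSourceComponent E F' S' ∧ S' ⊆ C := by
  classical
  obtain ⟨v, hv⟩ := hne
  set r := stepRel E F' with hr
  let K : Finset V := {w | ReflTransGen r w v}.toFinset
  have hvK : v ∈ K := by
    simp only [K, Set.mem_toFinset, Set.mem_setOf_eq]
    exact ReflTransGen.refl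
  let g : V → ℕ := fun w => ({x | ReflTransGen r x w}.toFinset).card
  obtain ⟨u, huK, hmin⟩ := K.exists_min_image g ⟨v, hvK⟩
  have huv : ReflTransGen r u v := by simpa [K] using huK
  have huC : u ∈ C := mem_of_reach hclosed huv hv
  refine ⟨{w | ReflTransGen r u w ∧ ReflTransGen r w u}, ⟨⟨u, hdisj u huC, rfl⟩, ?_⟩, ?_⟩
  · rintro a ha b ⟨hub, hbu⟩ hab
    have hau : ReflTransGen r a u := (ReflTransGen.single hab).trans hbu
    have haK : a ∈ K := by
      simp only [K, Set.mem_toFinset, Set.mem_setOf_eq]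
      exact hau.trans huv
    have hsub : {x | ReflTransGen r x a}.toFinset ⊆ {x | ReflTransGen r x u}.toFinset := by
      intro x hx
      simp only [Set.mem_toFinset, Set.mem_setOf_eq] at hx ⊢
      exact hx.trans hau
    have heq := Finset.eq_of_subset_of_card_le hsub (hmin a haK)
    have hua : ReflTransGen r u a := by
      have hself : u ∈ {x | ReflTransGen r x u}.toFinset := by
        simp only [Set.mem_toFinset, Set.mem_setOf_eq]
        exact ReflTransGen.refl
      rw [← heq] at hself
      simpa using hself
    exact ha ⟨hua, hau⟩
  · rintro w ⟨-, hwu⟩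
    exact mem_of_reach hclosed (hwu.trans huv) hv

lemma closed_ncard_ge [Fintype V] {E : V → V → Prop} {f : ℕ} (hCS : ConditionS E f)
    {F' C : Set V} (hF' : F'.ncard ≤ f) (hne : C.Nonempty)
    (hdisj : ∀ c ∈ C, c ∉ F')
    (hclosed : ∀ a ∉ C, ∀ b ∈ C, ¬ stepRel E F' a b) : f + 1 ≤ C.ncard := by
  obtain ⟨S₀, hS₀, hcard, huniq⟩ := hCS F' hF'
  obtain ⟨S₁, hS₁, hsub⟩ := exists_source_in_closed E F' C hne hdisj hclosed
  have h := huniq S₁ hS₁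
  exact hcard.trans (Set.ncard_le_ncard (h ▸ hsub) (Set.toFinite C))

end Aux

theorem matching_from_F1_to_source_component {V : Type*} [Fintype V]
    (E : V → V → Prop) (f p : ℕ) (hf : 0 < f) (hfn : f < Fintype.card V)
    (hCS : ConditionS E f) (F : Set V) (hF : F.ncard = f)
    (S : Set V) (hS : IsSourceComponent E F S) (hScard : S.ncard = f + p)
    (hp0 : 0 < p) (hpf : p ≤ f)
    (k : ℕ) (hpk : p ≤ k) (hkf : k ≤ f)
    (F1 : Set V) (hF1 : F1 ⊆ F) (hF1card : F1.ncard = k) :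
    ∃ x y : Fin (k - p + 1) → V,
      Function.Injective x ∧ Function.Injective y ∧
      ∀ i, x i ∈ F1 ∧ y i ∈ S ∧ E (x i) (y i) := by
  classical
  have hSF : ∀ w ∈ S, w ∉ F := source_not_mem hS
  -- The deficiency-Hall condition
  have key : ∀ X : Set V, X ⊆ F1 →
      X.ncard < {y | y ∈ S ∧ ∃ x ∈ X, E x y}.ncard + p := by
    intro X hXF1
    by_contra hcon
    push_neg at hcon
    set N : Set V := {y | y ∈ S ∧ ∃ x ∈ X, E x y} with hNdef
    have hNS : N ⊆ S := fun y hy => hy.1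
    have hXF : X ⊆ F := hXF1.trans hF1
    have hXcard : X.ncard ≤ k := hF1card ▸ Set.ncard_le_ncard hXF1 (Set.toFinite F1)
    have hncard : N.ncard + p ≤ X.ncard := hcon
    have hSdiff : (S \ N).ncard = f + p - N.ncard := by
      rw [Set.ncard_diff hNS (Set.toFinite N), hScard]
    obtain ⟨T, hTsub, hTcard⟩ :=
      Set.exists_subset_card_eq (s := S \ N) (n := p - N.ncard) (by omega)
    have hTS : T ⊆ S := hTsub.trans Set.diff_subset
    have hTN : Disjoint N T :=
      Set.disjoint_of_subset_right hTsub Set.disjoint_sdiff_right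
    set F'' : Set V := (F \ X) ∪ (N ∪ T) with hF''def
    set C : Set V := S \ (N ∪ T) with hCdef
    have hNTS : N ∪ T ⊆ S := Set.union_subset hNS hTS
    have hNTcard : (N ∪ T).ncard = N.ncard + (p - N.ncard) := by
      rw [Set.ncard_union_eq hTN (Set.toFinite N) (Set.toFinite T), hTcard]
    have hFXcard : (F \ X).ncard = f - X.ncard := by
      rw [Set.ncard_diff hXF (Set.toFinite X), hF]
    have hdisjF : Disjoint (F \ X) (N ∪ T) := by
      rw [Set.disjoint_left]
      rintro a ⟨haF, -⟩ haNT
      exact hSF a (hNTS haNT) haF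
    have hF''card : F''.ncard ≤ f := by
      rw [hF''def, Set.ncard_union_eq hdisjF (Set.toFinite _) (Set.toFinite _),
        hFXcard, hNTcard]
      omega
    have hCcard : C.ncard = f + p - (N.ncard + (p - N.ncard)) := by
      rw [hCdef, Set.ncard_diff hNTS (Set.toFinite _), hScard, hNTcard]
    have hCne : C.Nonempty := by
      rw [← Set.ncard_pos (Set.toFinite C)]
      omega
    have hdisjC : ∀ c ∈ C, c ∉ F'' := by
      rintro c ⟨hcS, hcNT⟩ (⟨hcF, -⟩ | h)
      · exact hSF c hcS hcF
      · exact hcNT h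
    have hclosedC : ∀ a ∉ C, ∀ b ∈ C, ¬ stepRel E F'' a b := by
      rintro a ha b ⟨hbS, hbNT⟩ ⟨haF'', hbF'', hab⟩
      by_cases haS : a ∈ S
      · have haNT : a ∈ N ∪ T := by
          by_contra h
          exact ha ⟨haS, h⟩
        exact haF'' (Or.inr haNT)
      by_cases haF : a ∈ F
      · have haX : a ∈ X := by
          by_contra h
          exact haF'' (Or.inl ⟨haF, h⟩)
        exact hbNT (Or.inl ⟨hbS, a, haX, hab⟩)
      · exact hS.2 a haS b hbS ⟨haF, hSF b hbS, hab⟩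
    have := closed_ncard_ge hCS hF''card hCne hdisjC hclosedC
    omega
  -- Hall's theorem with p-1 dummy vertices
  obtain ⟨q, hq⟩ : ∃ q, p = q + 1 := ⟨p - 1, by omega⟩
  set FF1 : Finset V := (Set.toFinite F1).toFinset with hFF1def
  have hmemFF1 : ∀ x : V, x ∈ FF1 ↔ x ∈ F1 := fun x => Set.Finite.mem_toFinset _
  have hFF1card : FF1.card = k := by
    rw [← Set.ncard_eq_toFinset_card F1 (Set.toFinite F1)]
    exact hF1card
  set nbr : FF1 → Finset V := fun x => Finset.univ.filter (fun y => y ∈ S ∧ E x.1 y)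
    with hnbrdef
  set t : FF1 → Finset (V ⊕ Fin q) :=
    fun x => (nbr x).image Sum.inl ∪ Finset.univ.image Sum.inr with htdef
  have hall : ∀ s : Finset FF1, s.card ≤ (s.biUnion t).card := by
    intro s
    rcases s.eq_empty_or_nonempty with rfl | hs
    · simp
    have hsub : (s.biUnion nbr).image Sum.inl ∪
        (Finset.univ.image (Sum.inr : Fin q → V ⊕ Fin q)) ⊆ s.biUnion t := by
      intro z hz
      rcases Finset.mem_union.1 hz with hz | hz
      · obtain ⟨y, hy, rfl⟩ := Finset.mem_image.1 hz
        obtain ⟨x, hx, hyx⟩ := Finset.mem_biUnion.1 hy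
        exact Finset.mem_biUnion.2
          ⟨x, hx, Finset.mem_union_left _ (Finset.mem_image_of_mem _ hyx)⟩
      · obtain ⟨x0, hx0⟩ := hs
        exact Finset.mem_biUnion.2 ⟨x0, hx0, Finset.mem_union_right _ hz⟩
    have hdisj : Disjoint ((s.biUnion nbr).image Sum.inl)
        (Finset.univ.image (Sum.inr : Fin q → V ⊕ Fin q)) := by
      rw [Finset.disjoint_left]
      rintro z hz hz'
      obtain ⟨y, -, rfl⟩ := Finset.mem_image.1 hz
      obtain ⟨j, -, hj⟩ := Finset.mem_image.1 hz'
      exact Sum.inl_ne_inr hj.symm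
    have hcard : ((s.biUnion nbr).image Sum.inl ∪
        Finset.univ.image (Sum.inr : Fin q → V ⊕ Fin q)).card = (s.biUnion nbr).card + q := by
      rw [Finset.card_union_of_disjoint hdisj,
        Finset.card_image_of_injective _ Sum.inl_injective,
        Finset.card_image_of_injective _ Sum.inr_injective,
        Finset.card_univ, Fintype.card_fin]
    set X : Set V := ↑(s.image (fun x : FF1 => (x : V))) with hXdef
    have hXsub : X ⊆ F1 := by
      rintro y hy
      obtain ⟨x, -, rfl⟩ := Finset.mem_image.1 (Finset.mem_coe.1 hy)
      exact (hmemFF1 _).1 x.2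
    have hXcard : X.ncard = s.card := by
      rw [hXdef, Set.ncard_coe_finset,
        Finset.card_image_of_injective _ Subtype.val_injective]
    have hNX : {y | y ∈ S ∧ ∃ x ∈ X, E x y} = ↑(s.biUnion nbr) := by
      ext y
      constructor
      · rintro ⟨hyS, x, hxX, hxy⟩
        obtain ⟨x', hx's, rfl⟩ := Finset.mem_image.1 (Finset.mem_coe.1 hxX)
        exact Finset.mem_coe.2 (Finset.mem_biUnion.2
          ⟨x', hx's, Finset.mem_filter.2 ⟨Finset.mem_univ _, hyS, hxy⟩⟩)
      · intro hy
        obtain ⟨x, hxs, hyx⟩ := Finset.mem_biUnion.1 (Finset.mem_coe.1 hy)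
        obtain ⟨-, hyS, hxy⟩ := Finset.mem_filter.1 hyx
        exact ⟨hyS, x, Finset.mem_coe.2 (Finset.mem_image_of_mem _ hxs), hxy⟩
    have hk := key X hXsub
    rw [hXcard, hNX, Set.ncard_coe_finset] at hk
    calc s.card ≤ (s.biUnion nbr).card + q := by omega
      _ = _ := hcard.symm
      _ ≤ (s.biUnion t).card := Finset.card_le_card hsub
  obtain ⟨M, hMinj, hMmem⟩ :=
    (Finset.all_card_le_biUnion_card_iff_exists_injective t).1 hall
  set Good : Finset FF1 := Finset.univ.filter (fun x => (M x).isLeft) with hGooddef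
  have hBadcard : (Finset.univ.filter (fun x : FF1 => ¬ ((M x).isLeft : Prop))).card ≤ q := by
    set Bad := Finset.univ.filter (fun x : FF1 => ¬ ((M x).isLeft : Prop)) with hBaddef
    have himg : Bad.image M ⊆ Finset.univ.image (Sum.inr : Fin q → V ⊕ Fin q) := by
      intro z hz
      obtain ⟨x, hx, rfl⟩ := Finset.mem_image.1 hz
      have hxl := (Finset.mem_filter.1 hx).2
      cases hMx : M x with
      | inl y => rw [hMx] at hxl; simp at hxl
      | inr j => exact Finset.mem_image_of_mem _ (Finset.mem_univ j)
    have h1 := Finset.card_le_card himg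
    rw [Finset.card_image_of_injective _ hMinj] at h1
    calc Bad.card ≤ (Finset.univ.image (Sum.inr : Fin q → V ⊕ Fin q)).card := h1
      _ ≤ Fintype.card (Fin q) := by
          rw [← Finset.card_univ]
          exact Finset.card_image_le
      _ = q := Fintype.card_fin q
  have hGoodcard : k - q ≤ Good.card := by
    rw [hGooddef]
    have hsum := Finset.card_filter_add_card_filter_not
      (s := (Finset.univ : Finset FF1)) (p := fun x => ((M x).isLeft : Prop))
    rw [Finset.card_univ, Fintype.card_coe, hFF1card] at hsum
    omega
  have hm : k - p + 1 ≤ Good.card := by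
    have hqe : k - p + 1 = k - q := by omega
    rw [hqe]
    exact hGoodcard
  obtain ⟨G', hG'sub, hG'card⟩ := Finset.exists_subset_card_eq hm
  have hG'eq : Fintype.card G' = k - p + 1 := by
    rw [Fintype.card_coe]; exact hG'card
  let e : Fin (k - p + 1) → G' := (Fintype.equivFinOfCardEq hG'eq).symm
  have heinj : Function.Injective e := (Fintype.equivFinOfCardEq hG'eq).symm.injective
  have hGoodmem : ∀ i, ((e i : FF1) ∈ Good) := fun i => hG'sub (e i).2
  have hleft : ∀ i, ((M (e i : FF1)).isLeft : Prop) := fun i =>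
    (Finset.mem_filter.1 (hGoodmem i)).2
  refine ⟨fun i => ((e i : FF1) : V), fun i => (M (e i : FF1)).getLeft (hleft i), ?_, ?_, ?_⟩
  · intro i j hij
    exact heinj (Subtype.val_injective (Subtype.val_injective hij))
  · intro i j hij
    have hij' : (M (e i : FF1)).getLeft (hleft i) = (M (e j : FF1)).getLeft (hleft j) := hij
    have hMeq : M (e i : FF1) = M (e j : FF1) := by
      rw [← Sum.inl_getLeft _ (hleft i), ← Sum.inl_getLeft _ (hleft j), hij']
    exact heinj (Subtype.val_injective (hMinj hMeq))
  · intro i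
    refine ⟨(hmemFF1 _).1 (e i : FF1).2, ?_⟩
    have hmem := hMmem (e i : FF1)
    rw [htdef] at hmem
    rcases Finset.mem_union.1 hmem with h | h
    · obtain ⟨y', hy', hEq⟩ := Finset.mem_image.1 h
      obtain ⟨-, hy'S, hEy'⟩ := Finset.mem_filter.1 hy'
      have hgl : y' = (M (e i : FF1)).getLeft (hleft i) :=
        Sum.inl_injective (hEq.trans (Sum.inl_getLeft _ (hleft i)).symm)
      constructor
      · show (M (e i : FF1)).getLeft (hleft i) ∈ S
        exact hgl ▸ hy'S
      · show E ((e i : FF1) : V) ((M (e i : FF1)).getLeft (hleft i))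
        exact hgl ▸ hEy'
    · obtain ⟨j, -, hj⟩ := Finset.mem_image.1 h
      have hl := hleft i
      rw [← hj] at hl
      simp at hl
end
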